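/- Let w₁, w₂ be nonzero reals with |w₁| < |w₂|, and let μ be a Borel probability measure on ℝ with ∫ x² dμ(x) < ∞. Let μ_abs denote the pushforward of μ under the absolute value map x ↦ |x|. Then R_s(μ_abs) ≥ R_s(μ). (Lemma 2, first inequality: folding the input distribution does not decrease the Wyner secrecy rate when the legitimate gain is smaller.) -/

import Mathlib

open MeasureTheory Real Filter

/-- The standard Gaussian tail function `Q(x) = ∫_x^∞ (2π)^{-1/2} e^{-u²/2} du`. -/
noncomputable def gaussQ (x : ℝ) : ℝ :=
  ∫ u in Set.Ioi x, (Real.sqrt (2 * Real.pi))⁻¹ * Real.exp (-u ^ 2 / 2)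

noncomputable def gpdf (u : ℝ) : ℝ := (Real.sqrt (2 * Real.pi))⁻¹ * Real.exp (-u ^ 2 / 2)

lemma gpdf_cont : Continuous gpdf := by
  unfold gpdf; continuity

lemma gpdf_pos (u : ℝ) : 0 < gpdf u := by
  unfold gpdf
  positivity

lemma gpdf_le (u : ℝ) : gpdf u ≤ (Real.sqrt (2 * Real.pi))⁻¹ := by
  unfold gpdf
  nth_rewrite 2 [← mul_one (Real.sqrt (2 * Real.pi))⁻¹]
  have h1 : Real.exp (-u ^ 2 / 2) ≤ 1 := Real.exp_le_one_iff.2 (by nlinarith [sq_nonneg u])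
  have h2 : (0:ℝ) ≤ (Real.sqrt (2 * Real.pi))⁻¹ := by positivity
  nlinarith

lemma gpdf_even (u : ℝ) : gpdf (-u) = gpdf u := by unfold gpdf; ring_nf

lemma gpdf_integrable : Integrable gpdf := by
  have h : Integrable (fun u : ℝ => Real.exp (-(1/2 : ℝ) * u ^ 2)) := integrable_exp_neg_mul_sq (by norm_num)
  have := h.const_mul (Real.sqrt (2 * Real.pi))⁻¹
  convert this using 2 with u
  unfold gpdf
  ring_nf

lemma gpdf_integral : ∫ u, gpdf u = 1 := by
  unfold gpdf
  rw [integral_const_mul]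
  have h : ∫ u : ℝ, Real.exp (-u ^ 2 / 2) = ∫ u : ℝ, Real.exp (-(1/2 : ℝ) * u ^ 2) := by
    congr 1 with u; ring_nf
  rw [h, integral_gaussian]
  rw [inv_mul_eq_div, div_eq_one_iff_eq (by positivity)]
  rw [show π / (1/2 : ℝ) = 2 * π by ring]

lemma gaussQ_eq (x : ℝ) : gaussQ x = ∫ u in Set.Ioi x, gpdf u := rfl

lemma gaussQ_add_neg (x : ℝ) : gaussQ x + gaussQ (-x) = 1 := by
  rw [gaussQ_eq, gaussQ_eq]
  have h1 : ∫ u in Set.Ioi (-x), gpdf u = ∫ u in Set.Ioi (-x), gpdf (-u) := by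
    congr 1 with u; rw [gpdf_even]
  have h2 : ∫ u in Set.Ioi (-x), gpdf (-u) = ∫ u in Set.Iic x, gpdf u := by
    rw [integral_comp_neg_Ioi]; norm_num
  rw [h1, h2, add_comm]
  have h3 : (∫ u in Set.Iic x, gpdf u) + ∫ u in Set.Ioi x, gpdf u = ∫ u, gpdf u := by
    have := MeasureTheory.integral_add_compl (measurableSet_Iic (a := x)) gpdf_integrable
    rwa [Set.compl_Iic] at this
  rw [h3, gpdf_integral]

lemma gaussQ_antitone : Antitone gaussQ := by
  intro x y hxy
  rw [gaussQ_eq, gaussQ_eq]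
  apply MeasureTheory.setIntegral_mono_set gpdf_integrable.integrableOn
    (Eventually.of_forall fun u => (gpdf_pos u).le)
  exact HasSubset.Subset.eventuallyLE (Set.Ioi_subset_Ioi hxy)

lemma gaussQ_pos (x : ℝ) : 0 < gaussQ x := by
  rw [gaussQ_eq]
  rw [MeasureTheory.setIntegral_pos_iff_support_of_nonneg_ae
    (Eventually.of_forall fun u => (gpdf_pos u).le) gpdf_integrable.integrableOn]
  have : Function.support gpdf = Set.univ := by
    ext u; simp [Function.support, (gpdf_pos u).ne']
  rw [this]
  simp

lemma gaussQ_zero : gaussQ 0 = 1/2 := by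
  have := gaussQ_add_neg 0
  rw [neg_zero] at this; linarith

lemma gaussQ_lt_one (x : ℝ) : gaussQ x < 1 := by
  have := gaussQ_add_neg x
  have := gaussQ_pos (-x)
  linarith

lemma gaussQ_le_half {x : ℝ} (hx : 0 ≤ x) : gaussQ x ≤ 1/2 := by
  rw [← gaussQ_zero]; exact gaussQ_antitone hx

lemma gaussQ_intervalInt (a b : ℝ) : gaussQ a - gaussQ b = ∫ u in a..b, gpdf u := by
  rcases le_total a b with h | h
  · rw [intervalIntegral.integral_of_le h]
    have hsplit : (∫ u in Set.Ioc a b, gpdf u) + ∫ u in Set.Ioi b, gpdf u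
        = ∫ u in Set.Ioi a, gpdf u := by
      rw [← MeasureTheory.setIntegral_union (by simp [Set.disjoint_left])
        measurableSet_Ioi gpdf_integrable.integrableOn gpdf_integrable.integrableOn,
        Set.Ioc_union_Ioi_eq_Ioi h]
    rw [gaussQ_eq, gaussQ_eq, ← hsplit]; ring
  · rw [intervalIntegral.integral_of_ge h]
    have hsplit : (∫ u in Set.Ioc b a, gpdf u) + ∫ u in Set.Ioi a, gpdf u
        = ∫ u in Set.Ioi b, gpdf u := by
      rw [← MeasureTheory.setIntegral_union (by simp [Set.disjoint_left])
        measurableSet_Ioi gpdf_integrable.integrableOn gpdf_integrable.integrableOn,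
        Set.Ioc_union_Ioi_eq_Ioi h]
    rw [gaussQ_eq, gaussQ_eq, ← hsplit]; ring

lemma gaussQ_hasDerivAt (x : ℝ) : HasDerivAt gaussQ (-gpdf x) x := by
  have h : ∀ y, gaussQ y = gaussQ 0 - ∫ u in (0:ℝ)..y, gpdf u := by
    intro y
    have := gaussQ_intervalInt 0 y; linarith
  have hd : HasDerivAt (fun y => ∫ u in (0:ℝ)..y, gpdf u) (gpdf x) x :=
    intervalIntegral.integral_hasDerivAt_right gpdf_integrable.intervalIntegrable
      (gpdf_cont.stronglyMeasurableAtFilter _ _) gpdf_cont.continuousAt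
  have := (hasDerivAt_const x (gaussQ 0)).sub hd
  rw [zero_sub] at this
  exact this.congr_of_eventuallyEq (Eventually.of_forall fun y => h y)

lemma gaussQ_cont : Continuous gaussQ :=
  continuous_iff_continuousAt.2 fun x => (gaussQ_hasDerivAt x).continuousAt

lemma gaussQ_mem (x : ℝ) : gaussQ x ∈ Set.Icc (0:ℝ) 1 :=
  ⟨(gaussQ_pos x).le, (gaussQ_lt_one x).le⟩

/-- `η(t) = -t log t` (with `η(0) = 0`, automatic since `Real.log 0 = 0`). -/
noncomputable def eta (t : ℝ) : ℝ := -t * Real.log t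
/-- The binary entropy function `h(p) = -p log p - (1-p) log (1-p)`. -/
noncomputable def binEnt (p : ℝ) : ℝ := eta p + eta (1 - p)

lemma binEnt_symm (p : ℝ) : binEnt (1 - p) = binEnt p := by
  unfold binEnt; rw [sub_sub_cancel]; ring

lemma eta_nonneg {t : ℝ} (h0 : 0 ≤ t) (h1 : t ≤ 1) : 0 ≤ eta t := by
  unfold eta
  rcases eq_or_lt_of_le h0 with h | h
  · simp [← h]
  · have := Real.log_nonpos h.le h1
    nlinarith

lemma eta_le_one {t : ℝ} (h0 : 0 ≤ t) (h1 : t ≤ 1) : eta t ≤ 1 := by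
  unfold eta
  rcases eq_or_lt_of_le h0 with h | h
  · simp [← h]
  · have hlog : Real.log (1/t) ≤ 1/t - 1 := by
      have := Real.log_le_sub_one_of_pos (x := 1/t) (by positivity)
      linarith
    rw [one_div, Real.log_inv] at hlog
    have key : -t * Real.log t ≤ t * (t⁻¹ - 1) := by
      rw [neg_mul, ← mul_neg]
      exact mul_le_mul_of_nonneg_left hlog h.le
    have : t * (t⁻¹ - 1) = 1 - t := by field_simp
    linarith

lemma binEnt_bounds {p : ℝ} (h0 : 0 ≤ p) (h1 : p ≤ 1) : 0 ≤ binEnt p ∧ binEnt p ≤ 2 := by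
  have e1 := eta_nonneg h0 h1
  have e2 := eta_nonneg (by linarith : (0:ℝ) ≤ 1 - p) (by linarith)
  have e3 := eta_le_one h0 h1
  have e4 := eta_le_one (by linarith : (0:ℝ) ≤ 1 - p) (by linarith)
  unfold binEnt; constructor <;> linarith

lemma eta_hasDerivAt {t : ℝ} (ht : 0 < t) : HasDerivAt eta (-(Real.log t + 1)) t := by
  have h1 : HasDerivAt (fun t : ℝ => t * Real.log t) (Real.log t + 1) t := by
    have := (hasDerivAt_id t).mul (Real.hasDerivAt_log ht.ne')
    refine this.congr_deriv ?_
    field_simp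
    simp only [id]; ring
  have := h1.neg
  rw [show (-fun x : ℝ => x * Real.log x) = eta from by funext x; unfold eta; simp only [Pi.neg_apply]; ring] at this
  exact this

lemma binEnt_hasDerivAt {p : ℝ} (h0 : 0 < p) (h1 : p < 1) :
    HasDerivAt binEnt (Real.log (1 - p) - Real.log p) p := by
  have ha := eta_hasDerivAt h0
  have hb : HasDerivAt (fun p : ℝ => eta (1 - p)) (Real.log (1 - p) + 1) p := by
    have hc : HasDerivAt (fun p : ℝ => 1 - p) (-1) p := by
      simpa using (hasDerivAt_id p).const_sub (1:ℝ)
    have := (eta_hasDerivAt (by linarith : 0 < 1 - p)).comp p hc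
    refine this.congr_deriv ?_; ring
  have := ha.add hb
  rw [show binEnt = fun p => eta p + eta (1 - p) from rfl]
  refine this.congr_deriv ?_; ring

lemma binEnt_cont : Continuous binEnt := by
  have h : Continuous eta := by
    have := Real.continuous_mul_log
    have : Continuous fun t : ℝ => -(t * Real.log t) := this.neg
    convert this using 1; funext t; unfold eta; ring
  exact h.add (h.comp (continuous_const.sub continuous_id))

lemma key_ineq {a b I B' : ℝ} (ha : 0 < a) (hab : a ≤ b) (hb : b ≤ 1 - a)
    (hI : 0 ≤ I) (hB : |B'| ≤ I) :
    (Real.log (1 - a) - Real.log a) * (-I) - (Real.log (1 - b) - Real.log b) * B' ≤ 0 := by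
  have hb0 : 0 < b := lt_of_lt_of_le ha hab
  have h1b : 0 < 1 - b := lt_of_lt_of_le ha (by linarith)
  have h1a : 0 < 1 - a := lt_of_lt_of_le hb0 hb
  have l1 : Real.log a ≤ Real.log b := (Real.log_le_log_iff ha hb0).2 hab
  have l2 : Real.log b ≤ Real.log (1 - a) := (Real.log_le_log_iff hb0 h1a).2 hb
  have l3 : Real.log a ≤ Real.log (1 - b) := (Real.log_le_log_iff ha h1b).2 (by linarith)
  have l4 : Real.log (1 - b) ≤ Real.log (1 - a) := (Real.log_le_log_iff h1b h1a).2 (by linarith)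
  have hLb : |Real.log (1 - b) - Real.log b| ≤ Real.log (1 - a) - Real.log a :=
    abs_le.2 ⟨by linarith, by linarith⟩
  have habs : |(Real.log (1 - b) - Real.log b) * B'| ≤ (Real.log (1 - a) - Real.log a) * I := by
    rw [abs_mul]
    exact mul_le_mul hLb hB (abs_nonneg _) (le_trans (abs_nonneg _) hLb)
  have := (abs_le.1 habs).1
  nlinarith

section Param

variable {μ : Measure ℝ} [IsProbabilityMeasure μ]

lemma Qcomp_integrable (g : ℝ → ℝ) (hg : Measurable g) (w : ℝ) :
    Integrable (fun x => gaussQ (w * g x)) μ := by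
  refine (integrable_const (1:ℝ)).mono'
    ((gaussQ_cont.measurable.comp ((measurable_const.mul hg))).aestronglyMeasurable) ?_
  refine Eventually.of_forall fun x => ?_
  rw [Real.norm_eq_abs, abs_le]
  have := gaussQ_mem (w * g x)
  exact ⟨by linarith [this.1], this.2⟩

lemma binEntQcomp_integrable (g : ℝ → ℝ) (hg : Measurable g) (w : ℝ) :
    Integrable (fun x => binEnt (gaussQ (w * g x))) μ := by
  refine (integrable_const (2:ℝ)).mono'
    ((binEnt_cont.measurable.comp (gaussQ_cont.measurable.comp
      ((measurable_const.mul hg)))).aestronglyMeasurable) ?_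
  refine Eventually.of_forall fun x => ?_
  rw [Real.norm_eq_abs, abs_le]
  have hm := gaussQ_mem (w * g x)
  have := binEnt_bounds hm.1 hm.2
  exact ⟨by linarith [this.1], this.2⟩

lemma intQ_pos (g : ℝ → ℝ) (hg : Measurable g) (w : ℝ) :
    0 < ∫ x, gaussQ (w * g x) ∂μ := by
  rw [MeasureTheory.integral_pos_iff_support_of_nonneg_ae
    (Eventually.of_forall fun x => (gaussQ_pos _).le) (Qcomp_integrable g hg w)]
  have : Function.support (fun x => gaussQ (w * g x)) = Set.univ := by
    ext x; simp [Function.support, (gaussQ_pos (w * g x)).ne']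
  rw [this]
  simp

lemma intQ_lt_one (g : ℝ → ℝ) (hg : Measurable g) (w : ℝ) :
    ∫ x, gaussQ (w * g x) ∂μ < 1 := by
  have h : 0 < ∫ x, (1 - gaussQ (w * g x)) ∂μ := by
    rw [MeasureTheory.integral_pos_iff_support_of_nonneg_ae
      (Eventually.of_forall fun x => by
        have := gaussQ_lt_one (w * g x)
        simp only [Pi.zero_apply]
        linarith)
      (show Integrable (fun x => 1 - gaussQ (w * g x)) μ from
        (integrable_const (1:ℝ)).sub (Qcomp_integrable g hg w))]
    have : Function.support (fun x => 1 - gaussQ (w * g x)) = Set.univ := by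
      ext x; simp only [Function.support, Set.mem_setOf_eq, Set.mem_univ, iff_true]
      have := gaussQ_lt_one (w * g x); intro hc; rw [sub_eq_zero] at hc; linarith
    rw [this]; simp
  rw [MeasureTheory.integral_sub (integrable_const 1) (Qcomp_integrable g hg w)] at h
  simp at h
  linarith

lemma hasDerivAt_intQ (g : ℝ → ℝ) (hg : Measurable g) (hgi : Integrable g μ) (w : ℝ) :
    HasDerivAt (fun v => ∫ x, gaussQ (v * g x) ∂μ)
      (∫ x, -(gpdf (w * g x) * g x) ∂μ) w := by
  have key := hasDerivAt_integral_of_dominated_loc_of_deriv_le (μ := μ)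
    (F := fun v x => gaussQ (v * g x)) (F' := fun v x => -(gpdf (v * g x) * g x))
    (x₀ := w) (bound := fun x => (Real.sqrt (2 * Real.pi))⁻¹ * |g x|) (s := Metric.ball w 1)
    (Metric.ball_mem_nhds w one_pos)
    (Eventually.of_forall fun v =>
      ((gaussQ_cont.measurable.comp ((measurable_const.mul hg))).aestronglyMeasurable))
    (Qcomp_integrable g hg w)
    (((gpdf_cont.measurable.comp (measurable_const.mul hg)).mul hg).neg.aestronglyMeasurable)
    (Eventually.of_forall fun x => fun v _ => by
      rw [Real.norm_eq_abs, abs_neg, abs_mul, abs_of_pos (gpdf_pos _)]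
      exact mul_le_mul_of_nonneg_right (gpdf_le _) (abs_nonneg _))
    ((hgi.abs.const_mul _))
    (Eventually.of_forall fun x => fun v _ => by
      have h1 : HasDerivAt (fun v : ℝ => v * g x) (g x) v := by
        simpa using (hasDerivAt_id v).mul_const (g x)
      have := (gaussQ_hasDerivAt (v * g x)).comp v h1
      refine this.congr_deriv ?_
      ring)
  exact key.2

end Param

lemma Q_abs_le {w : ℝ} (hw : 0 < w) (x : ℝ) : gaussQ (w * |x|) ≤ gaussQ (w * x) :=
  gaussQ_antitone (mul_le_mul_of_nonneg_left (le_abs_self x) hw.le)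

lemma Q_le_one_sub {w : ℝ} (hw : 0 < w) (x : ℝ) : gaussQ (w * x) ≤ 1 - gaussQ (w * |x|) := by
  rcases le_or_gt 0 x with h | h
  · rw [abs_of_nonneg h]
    have := gaussQ_le_half (by positivity : 0 ≤ w * x)
    linarith
  · rw [abs_of_neg h]
    have := gaussQ_add_neg (w * x)
    rw [show -(w * x) = w * -x by ring] at this
    linarith

lemma gpdf_mul_abs (w x : ℝ) : gpdf (w * |x|) = gpdf (w * x) := by
  rcases le_or_gt 0 x with h | h
  · rw [abs_of_nonneg h]
  · rw [abs_of_neg h, show w * -x = -(w * x) by ring, gpdf_even]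

lemma binEnt_Q_abs (w x : ℝ) : binEnt (gaussQ (w * |x|)) = binEnt (gaussQ (w * x)) := by
  rcases le_or_gt 0 x with h | h
  · rw [abs_of_nonneg h]
  · rw [abs_of_neg h, show w * -x = -(w * x) by ring]
    have := gaussQ_add_neg (w * x)
    rw [show gaussQ (-(w * x)) = 1 - gaussQ (w * x) by linarith, binEnt_symm]

noncomputable def Dfun (μ : Measure ℝ) (w : ℝ) : ℝ :=
  binEnt (∫ x, gaussQ (w * |x|) ∂μ) - binEnt (∫ x, gaussQ (w * x) ∂μ)

section Main

variable {μ : Measure ℝ} [IsProbabilityMeasure μ]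

lemma Dfun_deriv_nonpos (habs : Integrable (fun x : ℝ => |x|) μ)
    (hid : Integrable (fun x : ℝ => x) μ) {w : ℝ} (hw : 0 < w) :
    ∃ d, HasDerivAt (Dfun μ) d w ∧ d ≤ 0 := by
  have hA := hasDerivAt_intQ (μ := μ) (fun x => |x|) measurable_abs habs w
  have hB := hasDerivAt_intQ (μ := μ) (fun x => x) measurable_id hid w
  set a := ∫ x, gaussQ (w * |x|) ∂μ with ha_def
  set b := ∫ x, gaussQ (w * x) ∂μ with hb_def
  have ha : 0 < a := intQ_pos (fun x => |x|) measurable_abs w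
  have ha1 : a < 1 := intQ_lt_one (fun x => |x|) measurable_abs w
  have hb0 : 0 < b := intQ_pos (fun x => x) measurable_id w
  have hb1 : b < 1 := intQ_lt_one (fun x => x) measurable_id w
  have hab : a ≤ b :=
    MeasureTheory.integral_mono (Qcomp_integrable _ measurable_abs w)
      (Qcomp_integrable _ measurable_id w) (fun x => Q_abs_le hw x)
  have hb : b ≤ 1 - a := by
    have h1 : b ≤ ∫ x, (1 - gaussQ (w * |x|)) ∂μ :=
      MeasureTheory.integral_mono (Qcomp_integrable _ measurable_id w)
        ((integrable_const (1:ℝ)).sub (Qcomp_integrable _ measurable_abs w))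
        (fun x => Q_le_one_sub hw x)
    rwa [MeasureTheory.integral_sub (integrable_const 1)
      (Qcomp_integrable _ measurable_abs w), MeasureTheory.integral_const,
      probReal_univ, smul_eq_mul, one_mul] at h1
  have hba := binEnt_hasDerivAt ha ha1
  have hbb := binEnt_hasDerivAt hb0 hb1
  have hDA := hba.comp w hA
  have hDB := hbb.comp w hB
  have hD : HasDerivAt (Dfun μ)
      ((Real.log (1 - a) - Real.log a) * (∫ x, -(gpdf (w * |x|) * |x|) ∂μ)
        - (Real.log (1 - b) - Real.log b) * (∫ x, -(gpdf (w * x) * x) ∂μ)) w := by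
    exact hDA.sub hDB
  set I := ∫ x, gpdf (w * x) * |x| ∂μ with hI_def
  have hI : 0 ≤ I :=
    MeasureTheory.integral_nonneg fun x => mul_nonneg (gpdf_pos _).le (abs_nonneg _)
  have hAval : (∫ x, -(gpdf (w * |x|) * |x|) ∂μ) = -I := by
    rw [← MeasureTheory.integral_neg]
    congr 1 with x
    rw [gpdf_mul_abs]
  have hBval : |∫ x, -(gpdf (w * x) * x) ∂μ| ≤ I := by
    have := MeasureTheory.norm_integral_le_integral_norm (μ := μ)
      (f := fun x => -(gpdf (w * x) * x))
    rw [Real.norm_eq_abs] at this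
    refine le_trans this (le_of_eq ?_)
    congr 1 with x
    rw [Real.norm_eq_abs, abs_neg, abs_mul, abs_of_pos (gpdf_pos _)]
  refine ⟨_, hD, ?_⟩
  rw [hAval]
  exact key_ineq ha hab hb hI hBval

lemma Dfun_mono (habs : Integrable (fun x : ℝ => |x|) μ)
    (hid : Integrable (fun x : ℝ => x) μ) {s t : ℝ} (hs : 0 < s) (hst : s ≤ t) :
    Dfun μ t ≤ Dfun μ s := by
  have key : AntitoneOn (Dfun μ) (Set.Icc s t) := by
    apply antitoneOn_of_deriv_nonpos (convex_Icc s t)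
    · intro w hw
      obtain ⟨d, hd, _⟩ := Dfun_deriv_nonpos habs hid (lt_of_lt_of_le hs hw.1)
      exact hd.continuousAt.continuousWithinAt
    · intro w hw
      rw [interior_Icc] at hw
      obtain ⟨d, hd, _⟩ := Dfun_deriv_nonpos habs hid (lt_of_lt_of_le hs hw.1.le)
      exact hd.differentiableAt.differentiableWithinAt
    · intro w hw
      rw [interior_Icc] at hw
      obtain ⟨d, hd, hd0⟩ := Dfun_deriv_nonpos habs hid (lt_of_lt_of_le hs hw.1.le)
      rw [hd.deriv]
      exact hd0
  exact key ⟨le_refl s, hst⟩ ⟨hst, le_refl t⟩ hst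

end Main

section Final

variable {μ : Measure ℝ} [IsProbabilityMeasure μ]

lemma intQ_neg (g : ℝ → ℝ) (hg : Measurable g) (w : ℝ) :
    (∫ x, gaussQ (-w * g x) ∂μ) = 1 - ∫ x, gaussQ (w * g x) ∂μ := by
  have h : (∫ x, gaussQ (-w * g x) ∂μ) = ∫ x, (1 - gaussQ (w * g x)) ∂μ := by
    congr 1 with x
    have := gaussQ_add_neg (w * g x)
    rw [show -w * g x = -(w * g x) by ring]
    linarith
  rw [h, MeasureTheory.integral_sub (integrable_const 1) (Qcomp_integrable g hg w),
    MeasureTheory.integral_const, probReal_univ, smul_eq_mul, one_mul]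

lemma Dfun_neg (w : ℝ) : Dfun μ (-w) = Dfun μ w := by
  unfold Dfun
  rw [intQ_neg (fun x => |x|) measurable_abs w, intQ_neg (fun x => x) measurable_id w,
    binEnt_symm, binEnt_symm]

lemma Dfun_abs (w : ℝ) : Dfun μ |w| = Dfun μ w := by
  rcases abs_choice w with h | h
  · rw [h]
  · rw [h, Dfun_neg]

/-- `I(μ, w) = h(∫ Q(w·x) dμ) - ∫ h(Q(w·x)) dμ`, the mutual information of the real
Gaussian channel `Y = sgn(w·X + N)`, `N ~ N(0,1)`, with a one-bit ADC and input `X ~ μ`. -/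
noncomputable def miMeas (μ : Measure ℝ) (w : ℝ) : ℝ :=
  binEnt (∫ x, gaussQ (w * x) ∂μ) - ∫ x, binEnt (gaussQ (w * x)) ∂μ

/-- The Wyner secrecy rate `R_s(μ) = I(μ, w₁) - I(μ, w₂)`. -/
noncomputable def wynerRs (w₁ w₂ : ℝ) (μ : Measure ℝ) : ℝ := miMeas μ w₁ - miMeas μ w₂

lemma miMeas_map_sub (w : ℝ) :
    miMeas (μ.map (fun x : ℝ => |x|)) w - miMeas μ w = Dfun μ w := by
  have hmap1 : (∫ x, gaussQ (w * x) ∂(μ.map (fun x : ℝ => |x|)))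
      = ∫ x, gaussQ (w * |x|) ∂μ :=
    MeasureTheory.integral_map measurable_abs.aemeasurable
      (gaussQ_cont.comp (continuous_const.mul continuous_id)).aestronglyMeasurable
  have hmap2 : (∫ x, binEnt (gaussQ (w * x)) ∂(μ.map (fun x : ℝ => |x|)))
      = ∫ x, binEnt (gaussQ (w * |x|)) ∂μ :=
    MeasureTheory.integral_map measurable_abs.aemeasurable
      (binEnt_cont.comp (gaussQ_cont.comp (continuous_const.mul continuous_id))).aestronglyMeasurable
  have hsame : (∫ x, binEnt (gaussQ (w * |x|)) ∂μ) = ∫ x, binEnt (gaussQ (w * x)) ∂μ := by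
    congr 1 with x
    exact binEnt_Q_abs w x
  unfold miMeas Dfun
  rw [hmap1, hmap2, hsame]
  ring

end Final

/-- Lemma 2, first inequality: if `|w₁| < |w₂|`, folding the input distribution
(replacing `μ` by the law of `|X|`) does not decrease the Wyner secrecy rate. -/
theorem folded_rate_ge (w₁ w₂ : ℝ) (hw₁ : w₁ ≠ 0) (hw₂ : w₂ ≠ 0)
    (hlt : |w₁| < |w₂|) (μ : Measure ℝ) [IsProbabilityMeasure μ]
    (hint : Integrable (fun x : ℝ => x ^ 2) μ) :
    wynerRs w₁ w₂ μ ≤ wynerRs w₁ w₂ (μ.map (fun x : ℝ => |x|)) := by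
  have habs : Integrable (fun x : ℝ => |x|) μ := by
    refine ((integrable_const (1:ℝ)).add hint).mono'
      _root_.continuous_abs.aestronglyMeasurable (Eventually.of_forall fun x => ?_)
    simp only [Pi.add_apply, Real.norm_eq_abs, abs_abs]
    nlinarith [sq_nonneg (|x| - 1), sq_abs x]
  have hid : Integrable (fun x : ℝ => x) μ := by
    refine habs.mono' measurable_id.aestronglyMeasurable (Eventually.of_forall fun x => ?_)
    rw [Real.norm_eq_abs]
  have key : Dfun μ w₂ ≤ Dfun μ w₁ := by
    rw [← Dfun_abs (w := w₁), ← Dfun_abs (w := w₂)]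
    exact Dfun_mono habs hid (abs_pos.2 hw₁) hlt.le
  have h1 := miMeas_map_sub (μ := μ) w₁
  have h2 := miMeas_map_sub (μ := μ) w₂
  unfold wynerRs
  linarith
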